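/- If f ∈ 𝒞 is not isolated in 𝒞, then there exists a nondecreasing unbounded function h : ℕ → ℕ such that f ∈ A_{𝒞,h} but f is not in the interior of A_{𝒞,h} relative to 𝒞: for every n, [f↾n] ∩ 𝒞 ⊄ A_{𝒞,h}. -/

import Mathlib

/-- `f` extends the finite sequence `v`. -/
def Extends (f : ℕ → ℕ) (v : List ℕ) : Prop := ∀ j, ∀ _h : j < v.length, f j = v.getD j 0

/-- prefix `f↾n = (f 0, …, f (n-1))`. -/
def pref (f : ℕ → ℕ) (n : ℕ) : List ℕ := (List.range n).map f

/-- `K_𝒞` of a finite sequence, where `𝒞 = {F i : i ∈ ℕ}`. -/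
noncomputable def KCv (F : ℕ → ℕ → ℕ) (v : List ℕ) : ℕ∞ :=
  sInf ((fun i : ℕ => (i : ℕ∞)) '' {i | Extends (F i) v})

/-- `K_𝒞` of a function. -/
noncomputable def KCf (F : ℕ → ℕ → ℕ) (f : ℕ → ℕ) : ℕ∞ :=
  sInf ((fun i : ℕ => (i : ℕ∞)) '' {i | F i = f})

lemma pref_getD (g : ℕ → ℕ) {d m : ℕ} (h : d < m) : (pref g m).getD d 0 = g d := by
  simp [pref, List.getD, h]

lemma extends_pref {F0 g : ℕ → ℕ} {m : ℕ} : Extends F0 (pref g m) ↔ ∀ k < m, F0 k = g k := by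
  constructor
  · intro H k hk
    have := H k (by simpa [pref] using hk)
    rwa [pref_getD g hk] at this
  · intro H j hj
    have hj' : j < m := by simpa [pref] using hj
    rw [pref_getD g hj']
    exact H j hj'

lemma pref_eq_iff {g f : ℕ → ℕ} {N : ℕ} : pref g N = pref f N ↔ ∀ k < N, g k = f k := by
  constructor
  · intro H k hk
    have h1 := pref_getD g hk
    rw [H] at h1
    exact h1.symm.trans (pref_getD f hk)
  · intro H
    simp only [pref, List.map_eq_map_iff]
    intro a ha
    exact H a (List.mem_range.mp ha)

lemma extends_of_le {F0 g : ℕ → ℕ} {m m' : ℕ} (h : m ≤ m') (H : Extends F0 (pref g m')) :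
    Extends F0 (pref g m) :=
  extends_pref.mpr fun k hk => extends_pref.mp H k (lt_of_lt_of_le hk h)

lemma KCv_le_iff (F : ℕ → ℕ → ℕ) (v : List ℕ) (B : ℕ) :
    KCv F v ≤ (B : ℕ∞) ↔ ∃ j, j ≤ B ∧ Extends (F j) v := by
  constructor
  · intro H
    by_cases hne : {i | Extends (F i) v}.Nonempty
    · have hmem : sInf {i | Extends (F i) v} ∈ {i | Extends (F i) v} := Nat.sInf_mem hne
      refine ⟨sInf {i | Extends (F i) v}, ?_, hmem⟩
      have h1 : KCv F v ≤ ((sInf {i | Extends (F i) v} : ℕ) : ℕ∞) :=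
        sInf_le ⟨_, hmem, rfl⟩
      have h2 : ((sInf {i | Extends (F i) v} : ℕ) : ℕ∞) ≤ KCv F v := by
        apply le_sInf
        rintro a ⟨i, hi, rfl⟩
        simp only []
        exact_mod_cast Nat.sInf_le hi
      have : ((sInf {i | Extends (F i) v} : ℕ) : ℕ∞) ≤ (B : ℕ∞) := le_trans h2 H
      exact_mod_cast this
    · exfalso
      have : {i | Extends (F i) v} = ∅ := Set.not_nonempty_iff_eq_empty.mp hne
      rw [KCv, this] at H
      simp at H
  · rintro ⟨j, hj, hje⟩
    calc KCv F v ≤ (j : ℕ∞) := sInf_le ⟨j, hje, rfl⟩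
    _ ≤ (B : ℕ∞) := by exact_mod_cast hj

/-- for non-isolated `f ∈ 𝒞` there is an order `h` with
`f ∈ A_{𝒞,h}` but `f` not in the interior of `A_{𝒞,h}` relative to `𝒞`. -/
theorem stmt11 (F : ℕ → ℕ → ℕ) (f : ℕ → ℕ) (hf : ∃ i, F i = f)
    (hni : ∀ n, ∃ g, (∃ j, F j = g) ∧ g ≠ f ∧ pref g n = pref f n) :
    ∃ h : ℕ → ℕ, Monotone h ∧ (∀ k, ∃ n, k ≤ h n) ∧
      (∀ n, KCv F (pref f n) ≤ (h n : ℕ∞)) ∧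
      (∀ n, ∃ g, (∃ j, F j = g) ∧ pref g n = pref f n ∧
        ¬ (∀ m, KCv F (pref g m) ≤ (h m : ℕ∞))) := by
  obtain ⟨i0, hi0⟩ := hf
  -- key construction lemma
  have key : ∀ B n m₀ : ℕ, ∃ g : ℕ → ℕ, ∃ m : ℕ, m₀ ≤ m ∧ (∃ j, F j = g) ∧
      pref g n = pref f n ∧ ∀ j ≤ B, ¬ Extends (F j) (pref g m) := by
    intro B n m₀
    -- for each j with F j ≠ f, a point of difference
    have hD : ∀ j : ℕ, ∃ d : ℕ, F j ≠ f → F j d ≠ f d := by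
      intro j
      by_cases hj : F j = f
      · exact ⟨0, fun h => absurd hj h⟩
      · obtain ⟨d, hd⟩ := Function.ne_iff.mp hj
        exact ⟨d, fun _ => hd⟩
    choose D hDspec using hD
    set N : ℕ := max n ((Finset.range (B + 1)).sup fun j => D j + 1) with hN
    obtain ⟨g, hgj, hgf, hgpref⟩ := hni N
    have hagree : ∀ k < N, g k = f k := pref_eq_iff.mp hgpref
    obtain ⟨d, hd⟩ := Function.ne_iff.mp hgf
    have hdN : N ≤ d := by
      by_contra hc
      exact hd (hagree d (not_le.mp hc))
    refine ⟨g, max (d + 1) m₀, le_max_right _ _, hgj, ?_, ?_⟩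
    · exact pref_eq_iff.mpr fun k hk => hagree k (lt_of_lt_of_le hk (le_max_left _ _))
    · intro j hj hext
      have hext' : ∀ k < max (d + 1) m₀, F j k = g k := extends_pref.mp hext
      by_cases hjf : F j = f
      · have : F j d = g d := hext' d (lt_of_lt_of_le (Nat.lt_succ_self d) (le_max_left _ _))
        rw [hjf] at this
        exact hd (this.symm)
      · have hDj : D j + 1 ≤ N := by
          rw [hN]
          exact le_max_of_le_right
            (Finset.le_sup (f := fun j => D j + 1) (Finset.mem_range.mpr (Nat.lt_succ_of_le hj)))
        have h1 : D j < max (d + 1) m₀ :=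
          lt_of_lt_of_le (lt_of_lt_of_le (Nat.lt_of_succ_le hDj) (le_trans hdN (Nat.le_succ d)))
            (le_max_left _ _)
        have h2 : F j (D j) = g (D j) := hext' _ h1
        have h3 : g (D j) = f (D j) := hagree _ (Nat.lt_of_succ_le hDj)
        exact hDspec j hjf (h2.trans h3)
  choose G M hM1 hM2 hM3 hM4 using key
  -- recursive sequence p and functions gg
  set p : ℕ → ℕ := fun n => Nat.rec (M i0 0 0) (fun k ih => M (k + 1 + i0) (k + 1) (ih + 1)) n
    with hp
  set gg : ℕ → ℕ → ℕ :=
    fun n => Nat.rec (G i0 0 0) (fun k _ => G (k + 1 + i0) (k + 1) (p k + 1)) n with hgg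
  have hpsucc : ∀ k, p (k + 1) = M (k + 1 + i0) (k + 1) (p k + 1) := fun k => rfl
  have hgg0 : gg 0 = G i0 0 0 := rfl
  have hggsucc : ∀ k, gg (k + 1) = G (k + 1 + i0) (k + 1) (p k + 1) := fun k => rfl
  -- the facts for each n
  have hfacts : ∀ n, (∃ j, F j = gg n) ∧ pref (gg n) n = pref f n ∧
      ∀ j ≤ n + i0, ¬ Extends (F j) (pref (gg n) (p n)) := by
    intro n
    cases n with
    | zero =>
      refine ⟨hM2 i0 0 0, hM3 i0 0 0, ?_⟩
      exact fun j hj => hM4 i0 0 0 j (by omega)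
    | succ k =>
      exact ⟨hM2 _ _ _, hM3 _ _ _, hM4 _ _ _⟩
  have hpmono : StrictMono p := by
    apply strictMono_nat_of_lt_succ
    intro k
    have := hM1 (k + 1 + i0) (k + 1) (p k + 1)
    rw [← hpsucc k] at this
    omega
  have hple : ∀ k, k ≤ p k := fun k => hpmono.le_apply
  refine ⟨fun q => i0 + sInf {k | q ≤ p k}, ?_, ?_, ?_, ?_⟩
  · -- monotone
    intro a b hab
    apply Nat.add_le_add_left
    have hne : {k | b ≤ p k}.Nonempty := ⟨b, hple b⟩
    have hmem := Nat.sInf_mem hne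
    exact Nat.sInf_le (le_trans hab hmem)
  · -- unbounded
    intro K
    refine ⟨p K + 1, ?_⟩
    show K ≤ i0 + sInf {k | p K + 1 ≤ p k}
    have h1 : K ≤ sInf {k | p K + 1 ≤ p k} := by
      have hne : {k | p K + 1 ≤ p k}.Nonempty := ⟨p K + 1, hple _⟩
      apply le_csInf hne
      intro k hk
      have : p K < p k := hk
      exact le_of_lt (hpmono.lt_iff_lt.mp this)
    omega
  · -- f in A
    intro n
    have h1 : KCv F (pref f n) ≤ (i0 : ℕ∞) :=
      sInf_le ⟨i0, extends_pref.mpr fun k _ => congrFun hi0 k, rfl⟩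
    refine le_trans h1 ?_
    exact_mod_cast Nat.le_add_right i0 _
  · -- not interior
    intro n
    obtain ⟨hj, hpr, hnot⟩ := hfacts n
    refine ⟨gg n, hj, hpr, ?_⟩
    intro Hall
    have hle : i0 + sInf {k | p n ≤ p k} ≤ i0 + n :=
      Nat.add_le_add_left (Nat.sInf_le (by simp : n ∈ {k | p n ≤ p k})) i0
    have hall := Hall (p n)
    have h2 : KCv F (pref (gg n) (p n)) ≤ ((n + i0 : ℕ) : ℕ∞) := by
      refine le_trans hall ?_
      show ((i0 + sInf {k | p n ≤ p k} : ℕ) : ℕ∞) ≤ ((n + i0 : ℕ) : ℕ∞)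
      exact_mod_cast by omega
    obtain ⟨j, hjle, hjext⟩ := (KCv_le_iff F _ _).mp h2
    exact hnot j hjle hjext
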